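/- Let n ≥ 1 and let Ω ⊆ EuclideanSpace ℝ (Fin n) be a compact convex set with 0 ∈ Ω, and set r := Metric.infDist 0 (frontier Ω). Let Λ > 0 and let f : EuclideanSpace ℝ (Fin n) → ℝ be twice continuously differentiable (ContDiff ℝ 2), convex on Ω, with f(y) = 0 for every y in the frontier of Ω, and such that for every x in the interior of Ω the determinant of the Hessian matrix (the n × n matrix with entries iteratedFDeriv ℝ 2 f x applied to the pair of i-th and j-th standard basis vectors of EuclideanSpace ℝ (Fin n)) is at least Λ. Then f(0) ≤ −(Λ^(1/n) / 2) · r². -/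

import Mathlib

open Set Filter Topology Matrix

section MAHelpers

lemma deriv_contDiff_one {φ : ℝ → ℝ} (hφ : ContDiff ℝ 2 φ) : ContDiff ℝ 1 (deriv φ) := by
  have h2 : ContDiff ℝ ((1 : ℕ∞) + 1) φ := by exact_mod_cast hφ
  exact (contDiff_succ_iff_deriv.mp (by exact_mod_cast h2)).2.2

lemma secondDeriv_nonpos_of_isLocalMax {φ : ℝ → ℝ} (hφ : ContDiff ℝ 2 φ)
    (h : IsLocalMax φ 0) : deriv (deriv φ) 0 ≤ 0 := by
  by_contra hc
  push_neg at hc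
  set φ' := deriv φ with hφ'
  have hd1 : ContDiff ℝ 1 φ' := deriv_contDiff_one hφ
  have hd : HasDerivAt φ' (deriv φ' 0) 0 :=
    ((hd1.differentiable one_ne_zero) 0).hasDerivAt
  have h0 : φ' 0 = 0 := h.deriv_eq_zero
  have hslope : Tendsto (slope φ' 0) (𝓝[≠] 0) (𝓝 (deriv φ' 0)) :=
    hasDerivAt_iff_tendsto_slope.mp hd
  have hev : ∀ᶠ t in 𝓝[≠] (0:ℝ), 0 < slope φ' 0 t :=
    hslope.eventually (lt_mem_nhds hc)
  rw [eventually_nhdsWithin_iff, Metric.eventually_nhds_iff] at hev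
  obtain ⟨δ, hδ, hδ'⟩ := hev
  obtain ⟨ε, hε, hε'⟩ := Metric.eventually_nhds_iff.mp h
  set b := min δ ε / 2 with hb
  have hb0 : 0 < b := by positivity
  have hmono : StrictMonoOn φ (Icc 0 b) := by
    apply strictMonoOn_of_deriv_pos (convex_Icc 0 b) (hφ.continuous.continuousOn)
    intro t ht
    rw [interior_Icc] at ht
    have htδ : dist t 0 < δ := by
      rw [Real.dist_eq, sub_zero, abs_of_pos ht.1]
      calc t < b := ht.2
        _ ≤ δ / 2 := by rw [hb]; gcongr; exact min_le_left _ _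
        _ < δ := by linarith
    have := hδ' htδ (Set.mem_compl_singleton_iff.mpr (ne_of_gt ht.1))
    rw [slope_def_field, h0] at this
    simp only [sub_zero] at this
    have := mul_pos this ht.1
    rwa [div_mul_cancel₀ _ (ne_of_gt ht.1)] at this
  have hbI : b ∈ Icc (0:ℝ) b := ⟨hb0.le, le_rfl⟩
  have h1 : φ 0 < φ b := hmono ⟨le_rfl, hb0.le⟩ hbI hb0
  have h2 : φ b ≤ φ 0 := by
    apply hε'
    rw [Real.dist_eq, sub_zero, abs_of_pos hb0]
    calc b ≤ ε / 2 := by rw [hb]; gcongr; exact min_le_right _ _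
      _ < ε := by linarith
  linarith



lemma secondDeriv_nonneg_of_convexOn {φ : ℝ → ℝ} {δ : ℝ} (hδ : 0 < δ)
    (hφ : ContDiff ℝ 2 φ) (hconv : ConvexOn ℝ (Ioo (-δ) δ) φ) :
    0 ≤ deriv (deriv φ) 0 := by
  set φ' := deriv φ with hφ'
  have hd1 : ContDiff ℝ 1 φ' := deriv_contDiff_one hφ
  have hdφ : Differentiable ℝ φ := hφ.differentiable two_ne_zero
  have hd : HasDerivAt φ' (deriv φ' 0) 0 := ((hd1.differentiable one_ne_zero) 0).hasDerivAt
  have hslope : Tendsto (slope φ' 0) (𝓝[≠] 0) (𝓝 (deriv φ' 0)) :=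
    hasDerivAt_iff_tendsto_slope.mp hd
  have h0mem : (0:ℝ) ∈ Ioo (-δ) δ := by constructor <;> simp [hδ]
  have hmono : ∀ t ∈ Ioo (-δ) δ, t ≠ 0 → 0 ≤ slope φ' 0 t := by
    intro t ht ht0
    rw [slope_def_field]
    rcases lt_or_gt_of_ne ht0 with h | h
    · -- t < 0 : φ' t ≤ φ' 0
      have h1 : deriv φ t ≤ slope φ t 0 := hconv.deriv_le_slope ht h0mem h (hdφ t)
      have h2 : slope φ t 0 ≤ deriv φ 0 := hconv.slope_le_deriv ht h0mem h (hdφ 0)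
      have : φ' t - φ' 0 ≤ 0 := by simp only [hφ']; linarith
      have ht' : t - 0 < 0 := by linarith
      exact div_nonneg_of_nonpos this ht'.le
    · have h1 : deriv φ 0 ≤ slope φ 0 t := hconv.deriv_le_slope h0mem ht h (hdφ 0)
      have h2 : slope φ 0 t ≤ deriv φ t := hconv.slope_le_deriv h0mem ht h (hdφ t)
      have : 0 ≤ φ' t - φ' 0 := by simp only [hφ']; linarith
      have ht' : 0 < t - 0 := by linarith
      positivity
  refine ge_of_tendsto hslope ?_
  rw [eventually_nhdsWithin_iff]
  filter_upwards [Ioo_mem_nhds (neg_neg_of_pos hδ) hδ] with t ht ht0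
  exact hmono t ht ht0

section LineHelpers
variable {E : Type*} [NormedAddCommGroup E] [NormedSpace ℝ E]

lemma line_contDiff (x v : E) : ContDiff ℝ 2 (fun t : ℝ => x + t • v) :=
  contDiff_const.add (contDiff_id.smul contDiff_const)

lemma comp_line_contDiff {f : E → ℝ} (hf : ContDiff ℝ 2 f) (x v : E) :
    ContDiff ℝ 2 (fun t : ℝ => f (x + t • v)) :=
  hf.comp (line_contDiff x v)

lemma deriv_comp_line {f : E → ℝ} (hf : ContDiff ℝ 2 f) (x v : E) :
    deriv (fun t : ℝ => f (x + t • v)) = fun t => fderiv ℝ f (x + t • v) v := by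
  funext t
  have hL : HasDerivAt (fun s : ℝ => x + s • v) v t := by
    simpa using ((hasDerivAt_id t).smul_const v).const_add x
  have hfd : HasFDerivAt f (fderiv ℝ f (x + t • v)) (x + t • v) :=
    (hf.differentiable two_ne_zero _).hasFDerivAt
  exact (hfd.comp_hasDerivAt t hL).deriv

lemma deriv_deriv_comp_line {f : E → ℝ} (hf : ContDiff ℝ 2 f) (x v : E) :
    deriv (deriv (fun t : ℝ => f (x + t • v))) 0 = fderiv ℝ (fderiv ℝ f) x v v := by
  rw [deriv_comp_line hf x v]
  have hL : HasDerivAt (fun s : ℝ => x + s • v) v 0 := by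
    simpa using ((hasDerivAt_id (0:ℝ)).smul_const v).const_add x
  have hg : DifferentiableAt ℝ (fderiv ℝ f) x := by
    have : ContDiff ℝ 1 (fderiv ℝ f) := hf.fderiv_right (by norm_num)
    exact (this.differentiable one_ne_zero) x
  have h1 : HasDerivAt (fun t : ℝ => fderiv ℝ f (x + t • v)) (fderiv ℝ (fderiv ℝ f) x v) 0 := by
    have hx0 : x + (0:ℝ) • v = x := by simp
    have hg' : HasFDerivAt (fderiv ℝ f) (fderiv ℝ (fderiv ℝ f) x) (x + (0:ℝ) • v) := by
      rw [hx0]; exact hg.hasFDerivAt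
    have := hg'.comp_hasDerivAt 0 hL
    simpa [Function.comp_def] using this
  have h2 : HasDerivAt (fun t : ℝ => fderiv ℝ f (x + t • v) v)
      (fderiv ℝ (fderiv ℝ f) x v v) 0 := by
    have := (ContinuousLinearMap.apply ℝ ℝ v).hasFDerivAt.comp_hasDerivAt 0 h1
    simpa [Function.comp_def] using this
  simpa using h2.deriv
end LineHelpers

lemma det_le_pow_of_quadform {n : ℕ} {A : Matrix (Fin n) (Fin n) ℝ} {c : ℝ}
    (hsymm : A.IsHermitian)
    (h0 : ∀ u : Fin n → ℝ, 0 ≤ u ⬝ᵥ (A.mulVec u))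
    (hc : ∀ u : Fin n → ℝ, u ⬝ᵥ (A.mulVec u) ≤ c * ∑ i, (u i)^2) :
    A.det ≤ c ^ n := by
  have key : ∀ j, 0 ≤ hsymm.eigenvalues j ∧ hsymm.eigenvalues j ≤ c := by
    intro j
    set u : EuclideanSpace ℝ (Fin n) := hsymm.eigenvectorBasis j with hu
    have hnorm : ‖u‖ = 1 := hsymm.eigenvectorBasis.orthonormal.1 j
    have hsum : ∑ i, (u i)^2 = 1 := by
      have := EuclideanSpace.norm_eq u
      rw [hnorm] at this
      have h2 : Real.sqrt (∑ i, ‖u i‖^2) = 1 := this.symm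
      have := congrArg (fun x => x^2) h2
      simp only [Real.sq_sqrt (Finset.sum_nonneg fun i _ => sq_nonneg _), one_pow] at this
      simpa [Real.norm_eq_abs, sq_abs] using this
    have hquad : (⇑u) ⬝ᵥ (A.mulVec ⇑u) = hsymm.eigenvalues j := by
      rw [hsymm.mulVec_eigenvectorBasis]
      rw [dotProduct_smul]
      simp only [smul_eq_mul]
      rw [show (⇑u) ⬝ᵥ (⇑u) = ∑ i, (u i)^2 by simp [dotProduct, sq]]
      rw [hsum, mul_one]
    constructor
    · rw [← hquad]; exact h0 _
    · calc hsymm.eigenvalues j = (⇑u) ⬝ᵥ (A.mulVec ⇑u) := hquad.symm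
        _ ≤ c * ∑ i, (u i)^2 := hc _
        _ = c := by rw [hsum, mul_one]
  have hdet : A.det = ∏ j, hsymm.eigenvalues j := by
    simpa using hsymm.det_eq_prod_eigenvalues
  rw [hdet]
  calc ∏ j, hsymm.eigenvalues j ≤ ∏ _j : Fin n, c :=
        Finset.prod_le_prod (fun j _ => (key j).1) (fun j _ => (key j).2)
    _ = c ^ n := by simp

lemma euclidean_repr {n : ℕ} (v : EuclideanSpace ℝ (Fin n)) :
    ∑ i, v i • EuclideanSpace.single i (1:ℝ) = v := by
  have := (EuclideanSpace.basisFun (Fin n) ℝ).sum_repr' v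
  simpa [EuclideanSpace.basisFun_apply, EuclideanSpace.inner_single_left] using this

lemma euclidean_norm_sq {n : ℕ} (v : EuclideanSpace ℝ (Fin n)) :
    ‖v‖ ^ 2 = ∑ i, (v i) ^ 2 := by
  rw [EuclideanSpace.norm_eq, Real.sq_sqrt (Finset.sum_nonneg fun i _ => sq_nonneg _)]
  exact Finset.sum_congr rfl fun i _ => by rw [Real.norm_eq_abs, sq_abs]

lemma bilin_expand {n : ℕ}
    (B : EuclideanSpace ℝ (Fin n) →L[ℝ] EuclideanSpace ℝ (Fin n) →L[ℝ] ℝ)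
    (v : EuclideanSpace ℝ (Fin n)) :
    B v v = ∑ i, ∑ j, v i * v j *
      B (EuclideanSpace.single i (1:ℝ)) (EuclideanSpace.single j (1:ℝ)) := by
  conv_lhs => rw [← euclidean_repr v]
  rw [map_sum]
  refine Eq.trans (Finset.sum_congr rfl fun j _ => ?_) Finset.sum_comm
  rw [_root_.map_smul, smul_eq_mul, map_sum, ContinuousLinearMap.sum_apply, Finset.mul_sum]
  refine Finset.sum_congr rfl fun i _ => ?_
  rw [_root_.map_smul, ContinuousLinearMap.smul_apply, smul_eq_mul]
  ring

end MAHelpers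

theorem monge_ampere_comparison
    (n : ℕ) (hn : 1 ≤ n)
    (Ω : Set (EuclideanSpace ℝ (Fin n)))
    (hΩc : IsCompact Ω) (hΩconv : Convex ℝ Ω) (h0 : (0 : EuclideanSpace ℝ (Fin n)) ∈ Ω)
    (Λ : ℝ) (hΛ : 0 < Λ)
    (f : EuclideanSpace ℝ (Fin n) → ℝ)
    (hf : ContDiff ℝ 2 f)
    (hconv : ConvexOn ℝ Ω f)
    (hbd : ∀ y ∈ frontier Ω, f y = 0)
    (hdet : ∀ x ∈ interior Ω,
      Λ ≤ Matrix.det (Matrix.of fun i j : Fin n =>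
        iteratedFDeriv ℝ 2 f x
          ![EuclideanSpace.single i (1 : ℝ), EuclideanSpace.single j (1 : ℝ)])) :
    f 0 ≤ -(Λ ^ ((1 : ℝ) / n) / 2) * (Metric.infDist 0 (frontier Ω)) ^ 2 := by
  classical
  set r := Metric.infDist 0 (frontier Ω) with hr
  have hr0 : 0 ≤ r := Metric.infDist_nonneg
  set L := Λ ^ ((1 : ℝ) / n) with hL
  have hLpos : 0 < L := Real.rpow_pos_of_pos hΛ _
  have main : ∀ c : ℝ, 0 < c → c ^ n < Λ → f 0 ≤ -(c / 2) * r ^ 2 := by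
    intro c hcpos hcΛ
    set Q : EuclideanSpace ℝ (Fin n) → ℝ := fun x => c / 2 * (‖x‖ ^ 2 - r ^ 2) with hQ
    set g : EuclideanSpace ℝ (Fin n) → ℝ := fun x => f x - Q x with hg
    have hgcont : ContinuousOn g Ω := by
      apply ContinuousOn.sub hf.continuous.continuousOn
      have hQc : Continuous fun x : EuclideanSpace ℝ (Fin n) => ‖x‖ ^ 2 - r ^ 2 :=
        (continuous_norm.pow 2).sub continuous_const
      exact (continuous_const.mul hQc).continuousOn
    obtain ⟨x₀, hx₀Ω, hmax⟩ := hΩc.exists_isMaxOn ⟨0, h0⟩ hgcont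
    by_cases hcase : g x₀ ≤ 0
    · have h01 : g 0 ≤ g x₀ := hmax h0
      have hle : g 0 ≤ 0 := le_trans h01 hcase
      simp only [hg, hQ, norm_zero] at hle
      nlinarith [hle]
    · exfalso
      push_neg at hcase
      have hfrontier_le : ∀ y ∈ frontier Ω, g y ≤ 0 := by
        intro y hy
        have hry : r ≤ ‖y‖ := by
          have h := Metric.infDist_le_dist_of_mem (x := (0 : EuclideanSpace ℝ (Fin n))) hy
          rwa [dist_zero_left] at h
        have hsq : r ^ 2 ≤ ‖y‖ ^ 2 := by nlinarith
        simp only [hg, hQ, hbd y hy]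
        nlinarith
      have hx₀f : x₀ ∉ frontier Ω := fun h => absurd (hfrontier_le x₀ h) (not_le.mpr hcase)
      have hx₀int : x₀ ∈ interior Ω := by
        have hcl : IsClosed Ω := hΩc.isClosed
        rw [hcl.frontier_eq] at hx₀f
        simp only [Set.mem_diff, not_and, not_not] at hx₀f
        exact hx₀f hx₀Ω
      have hnbhd : Ω ∈ 𝓝 x₀ := mem_interior_iff_mem_nhds.mp hx₀int
      obtain ⟨δ, hδpos, hball⟩ := Metric.mem_nhds_iff.mp hnbhd
      set H : EuclideanSpace ℝ (Fin n) →L[ℝ] EuclideanSpace ℝ (Fin n) →L[ℝ] ℝ :=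
        fderiv ℝ (fderiv ℝ f) x₀ with hH
      have hHbounds : ∀ v : EuclideanSpace ℝ (Fin n), 0 ≤ H v v ∧ H v v ≤ c * ‖v‖ ^ 2 := by
        intro v
        set φ : ℝ → ℝ := fun t => f (x₀ + t • v) with hφ
        have hφC2 : ContDiff ℝ 2 φ := comp_line_contDiff hf x₀ v
        have hφ'' : deriv (deriv φ) 0 = H v v := deriv_deriv_comp_line hf x₀ v
        constructor
        · rw [← hφ'']
          set δ' := δ / (‖v‖ + 1) with hδ'
          have hδ'pos : 0 < δ' := by positivity
          have hsub : ∀ t ∈ Ioo (-δ') δ', x₀ + t • v ∈ Ω := by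
            intro t ht
            apply hball
            rw [Metric.mem_ball, dist_eq_norm]
            have hnn : ‖x₀ + t • v - x₀‖ = |t| * ‖v‖ := by
              rw [add_sub_cancel_left, norm_smul, Real.norm_eq_abs]
            rw [hnn]
            have habs : |t| < δ' := abs_lt.mpr ⟨ht.1, ht.2⟩
            calc |t| * ‖v‖ ≤ |t| * (‖v‖ + 1) := by
                  apply mul_le_mul_of_nonneg_left (by linarith) (abs_nonneg t)
              _ < δ' * (‖v‖ + 1) := by
                  apply mul_lt_mul_of_pos_right habs (by positivity)
              _ = δ := by rw [hδ']; field_simp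
          have hφconv : ConvexOn ℝ (Ioo (-δ') δ') φ := by
            refine ⟨convex_Ioo _ _, ?_⟩
            intro t ht s hs a b ha hb hab
            have key : x₀ + (a • t + b • s) • v = a • (x₀ + t • v) + b • (x₀ + s • v) := by
              rw [smul_add, smul_add, smul_smul, smul_smul]
              rw [show a • x₀ + (a * t) • v + (b • x₀ + (b * s) • v)
                  = (a • x₀ + b • x₀) + ((a * t) • v + (b * s) • v) by abel]
              rw [← add_smul, hab, one_smul, ← add_smul]
              simp [smul_eq_mul]
            simp only [hφ]
            rw [key]
            exact hconv.2 (hsub t ht) (hsub s hs) ha hb hab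
          exact secondDeriv_nonneg_of_convexOn hδ'pos hφC2 hφconv
        · set α := c / 2 * (‖x₀‖ ^ 2 - r ^ 2) with hα
          set β := c * (inner ℝ x₀ v : ℝ) with hβ
          set γ := c / 2 * ‖v‖ ^ 2 with hγ
          set ψ : ℝ → ℝ := fun t => φ t - (α + β * t + γ * t ^ 2) with hψ
          have hψeq : ∀ t, ψ t = g (x₀ + t • v) := by
            intro t
            simp only [hψ, hφ, hg, hQ, hα, hβ, hγ]
            have hexp : ‖x₀ + t • v‖ ^ 2
                = ‖x₀‖ ^ 2 + 2 * (inner ℝ x₀ (t • v) : ℝ) + ‖t • v‖ ^ 2 :=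
              norm_add_sq_real x₀ (t • v)
            have h1 : (inner ℝ x₀ (t • v) : ℝ) = t * (inner ℝ x₀ v : ℝ) := real_inner_smul_right _ _ _
            have h2 : ‖t • v‖ ^ 2 = t ^ 2 * ‖v‖ ^ 2 := by
              rw [norm_smul, Real.norm_eq_abs, mul_pow, sq_abs]
            rw [hexp, h1, h2]
            ring
          have hψmax : IsLocalMax ψ 0 := by
            have hcont : ContinuousAt (fun t : ℝ => x₀ + t • v) 0 := by fun_prop
            have hpre : (fun t : ℝ => x₀ + t • v) ⁻¹' Ω ∈ 𝓝 (0:ℝ) := by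
              apply hcont.preimage_mem_nhds
              simpa using hnbhd
            filter_upwards [hpre] with t ht
            rw [hψeq t, hψeq 0]
            simp only [zero_smul, add_zero]
            exact hmax ht
          have hpC2 : ContDiff ℝ 2 (fun t : ℝ => α + β * t + γ * t ^ 2) := by
            apply ContDiff.add
            apply ContDiff.add contDiff_const
            · exact contDiff_const.mul contDiff_id
            · exact contDiff_const.mul (contDiff_id.pow 2)
          have hψC2 : ContDiff ℝ 2 ψ := hφC2.sub hpC2
          have hp' : ∀ t : ℝ, HasDerivAt (fun t : ℝ => α + β * t + γ * t ^ 2)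
              (β + γ * (2 * t)) t := by
            intro t
            have h1 : HasDerivAt (fun t : ℝ => β * t) β t := by
              simpa using (hasDerivAt_id t).const_mul β
            have h2 : HasDerivAt (fun t : ℝ => γ * t ^ 2) (γ * (2 * t)) t := by
              simpa using (hasDerivAt_pow 2 t).const_mul γ
            exact (((hasDerivAt_const t α).add h1).add h2).congr_deriv (by ring)
          have hψ' : deriv ψ = fun t => deriv φ t - (β + γ * (2 * t)) := by
            funext t
            simp only [hψ]
            rw [deriv_fun_sub ((hφC2.differentiable two_ne_zero) t) (hp' t).differentiableAt]
            rw [(hp' t).deriv]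
          have hψ'' : deriv (deriv ψ) 0 = deriv (deriv φ) 0 - 2 * γ := by
            rw [hψ']
            have hdφ' : DifferentiableAt ℝ (deriv φ) 0 :=
              ((deriv_contDiff_one hφC2).differentiable one_ne_zero) 0
            have hq : HasDerivAt (fun t : ℝ => β + γ * (2 * t)) (γ * 2) 0 := by
              have h3 : HasDerivAt (fun t : ℝ => γ * (2 * t)) (γ * 2) 0 := by
                simpa [mul_comm] using ((hasDerivAt_id (0:ℝ)).const_mul 2).const_mul γ
              exact ((hasDerivAt_const (0:ℝ) β).add h3).congr_deriv (by ring)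
            rw [deriv_fun_sub hdφ' hq.differentiableAt, hq.deriv]
            ring
          have hle := secondDeriv_nonpos_of_isLocalMax hψC2 hψmax
          rw [hψ''] at hle
          rw [← hφ'']
          simp only [hγ] at hle ⊢
          linarith
      set A : Matrix (Fin n) (Fin n) ℝ :=
        Matrix.of (fun i j : Fin n =>
          H (EuclideanSpace.single i (1:ℝ)) (EuclideanSpace.single j (1:ℝ))) with hA
      have hHsymm := (hf.contDiffAt (x := x₀)).isSymmSndFDerivAt (by simp)
      have hAherm : A.IsHermitian := by
        ext i j
        simp only [Matrix.conjTranspose_apply, hA, Matrix.of_apply, star_trivial]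
        exact hHsymm _ _
      have hquadform : ∀ u : Fin n → ℝ,
          u ⬝ᵥ (A.mulVec u) = H ((EuclideanSpace.equiv (Fin n) ℝ).symm u)
            ((EuclideanSpace.equiv (Fin n) ℝ).symm u) := by
        intro u
        have h1 : u ⬝ᵥ (A.mulVec u) = ∑ i, ∑ j, u i * (A i j * u j) := by
          simp [dotProduct, Matrix.mulVec, Finset.mul_sum]
        rw [h1, bilin_expand]
        apply Finset.sum_congr rfl
        intro i _
        apply Finset.sum_congr rfl
        intro j _
        show u i * (H (EuclideanSpace.single i (1:ℝ)) (EuclideanSpace.single j (1:ℝ)) * u j)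
          = u i * u j * H (EuclideanSpace.single i (1:ℝ)) (EuclideanSpace.single j (1:ℝ))
        ring
      have hdetA : A.det ≤ c ^ n := by
        apply det_le_pow_of_quadform hAherm
        · intro u
          rw [hquadform u]
          exact (hHbounds _).1
        · intro u
          rw [hquadform u]
          have := (hHbounds ((EuclideanSpace.equiv (Fin n) ℝ).symm u)).2
          refine this.trans (le_of_eq ?_)
          congr 1
          rw [euclidean_norm_sq]
          rfl
      have hAeq : (Matrix.of fun i j : Fin n =>
          iteratedFDeriv ℝ 2 f x₀
            ![EuclideanSpace.single i (1 : ℝ), EuclideanSpace.single j (1 : ℝ)]) = A := by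
        ext i j
        simp only [Matrix.of_apply, hA]
        rw [iteratedFDeriv_two_apply]
        simp [hH]
      have hcontr := hdet x₀ hx₀int
      rw [hAeq] at hcontr
      linarith
  have hn0 : (n:ℝ) ≠ 0 := Nat.cast_ne_zero.mpr (by omega)
  have hLn : L ^ n = Λ := by
    rw [hL, ← Real.rpow_natCast (Λ ^ ((1:ℝ)/n)) n, ← Real.rpow_mul hΛ.le]
    rw [show (1:ℝ)/n * n = 1 by field_simp]
    exact Real.rpow_one Λ
  have hev : ∀ᶠ c in 𝓝[<] L, f 0 ≤ -(c/2) * r ^ 2 := by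
    have hIoo : Ioo 0 L ∈ 𝓝[<] L := Ioo_mem_nhdsLT_of_mem ⟨hLpos, le_rfl⟩
    filter_upwards [hIoo] with c hc
    apply main c hc.1
    rw [← hLn]
    exact pow_lt_pow_left₀ hc.2 hc.1.le (by omega)
  have htend : Tendsto (fun c : ℝ => -(c/2) * r ^ 2) (𝓝[<] L) (𝓝 (-(L/2) * r ^ 2)) := by
    apply Tendsto.mono_left _ nhdsWithin_le_nhds
    have hcont : Continuous (fun c : ℝ => -(c/2) * r ^ 2) := by fun_prop
    exact hcont.tendsto L
  exact ge_of_tendsto htend hev
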